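/- Let u be a semiclassical moment functional on real polynomials in d variables, with data Φ symmetric d×d of degree p, Ψ of size d×1 with degree q ≥ 1, s = max{p−2, q−1}, and let {ℙ_n}_{n≥0} be a WOPS with respect to u. Then for every n ≥ s+1 and every m with 0 ≤ m < n−s, the r_m×r_n matrix ⟨u, (∇ℙ_m^t)^t Φ ∇ℙ_n^t⟩ is zero (quasi-orthogonality of the gradients). -/
import Mathlib


open MvPolynomial Matrix Finset MeasureTheory

noncomputable section

/-- Real polynomials in `d` variables. -/
abbrev MPoly (d : ℕ) := MvPolynomial (Fin d) ℝ

/-- A moment functional: a linear functional on `MPoly d`. -/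
abbrev MomF (d : ℕ) := MPoly d →ₗ[ℝ] ℝ

/-- `r_n = binom(n + d - 1, n)`, the dimension of the space of homogeneous
polynomials of degree `n` in `d` variables. -/
def rdim (d n : ℕ) : ℕ := (n + d - 1).choose n

/-- Entrywise application of a moment functional to a polynomial matrix. -/
def mApply {d : ℕ} (u : MomF d) {m n : Type*} (M : Matrix m n (MPoly d)) : Matrix m n ℝ :=
  Matrix.of fun i j => u (M i j)

/-- The matrix Pearson equation `div(Φ u) = Ψᵗ u`, i.e. `⟨u, Φ ∇f + Ψ f⟩ = 0`
for every polynomial `f` (a system of `d` scalar equations). -/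
def Pearson {d : ℕ} (u : MomF d) (Φ : Matrix (Fin d) (Fin d) (MPoly d))
    (Ψ : Fin d → MPoly d) : Prop :=
  ∀ f : MPoly d, ∀ i : Fin d, u (∑ j, Φ i j * pderiv j f + Ψ i * f) = 0

/-- Degree of a polynomial matrix: max of total degrees of the entries. -/
def matDeg {d : ℕ} {m n : Type*} [Fintype m] [Fintype n]
    (M : Matrix m n (MPoly d)) : ℕ :=
  Finset.univ.sup fun p : m × n => (M p.1 p.2).totalDegree

/-- Degree of a polynomial (column) vector. -/
def vecDeg {d : ℕ} {m : Type*} [Fintype m] (v : m → MPoly d) : ℕ :=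
  Finset.univ.sup fun i => (v i).totalDegree

/-- The Jacobian `∇ℙᵗ`: the `d × m` matrix with `(i,k)` entry `∂ᵢ P k`. -/
def gradT {d m : ℕ} (P : Fin m → MPoly d) : Matrix (Fin d) (Fin m) (MPoly d) :=
  Matrix.of fun i k => pderiv i (P k)

/-- The Kronecker product `I_d ⊗ ℙᵗ`: the block-diagonal `d × (d·m)` matrix
whose `d` diagonal blocks equal the row vector `ℙᵗ`. -/
def kronIdRow {d m : ℕ} (P : Fin m → MPoly d) :
    Matrix (Fin d) (Fin d × Fin m) (MPoly d) :=
  Matrix.of fun i jk => if i = jk.1 then P jk.2 else 0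

/-- A constant real matrix viewed as a polynomial matrix. -/
def cmap {d : ℕ} {m n : Type*} (F : Matrix m n ℝ) : Matrix m n (MPoly d) :=
  F.map MvPolynomial.C

/-- `{ℙ_n}` is a weak orthogonal polynomial system with respect to `u`:
each entry of `ℙ_n` has total degree `n`, the entries of `ℙ_0, …, ℙ_n` form a
basis of the polynomials of total degree at most `n` (spanning + linear
independence), `⟨u, ℙ_n ℙ_mᵗ⟩ = 0` for `n ≠ m`, and `H_n = ⟨u, ℙ_n ℙ_nᵗ⟩` is
nonsingular. -/
structure IsWOPS {d : ℕ} (u : MomF d) (P : (n : ℕ) → Fin (rdim d n) → MPoly d) : Prop where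
  deg : ∀ n k, (P n k).totalDegree = n
  span : ∀ n : ℕ, MvPolynomial.restrictTotalDegree (Fin d) ℝ n ≤
    Submodule.span ℝ {g | ∃ m ≤ n, ∃ k, P m k = g}
  indep : LinearIndependent ℝ (fun p : (n : ℕ) × Fin (rdim d n) => P p.1 p.2)
  orth : ∀ m n, m ≠ n → ∀ j k, u (P m j * P n k) = 0
  Hdet : ∀ n, (Matrix.of fun j k : Fin (rdim d n) => u (P n j * P n k)).det ≠ 0

/-- The matrix `H_n = ⟨u, ℙ_n ℙ_nᵗ⟩`. -/
def Hmat {d : ℕ} (u : MomF d) (P : (n : ℕ) → Fin (rdim d n) → MPoly d) (n : ℕ) :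
    Matrix (Fin (rdim d n)) (Fin (rdim d n)) ℝ :=
  Matrix.of fun j k => u (P n j * P n k)

/-- The second-order differential operator
`L[f] = Σ_{i,j} φ_ij ∂²f/∂xᵢ∂xⱼ + Σ_i ψ_i ∂f/∂xᵢ` associated with `Φ`, `Ψ`. -/
def Lop {d : ℕ} (Φ : Matrix (Fin d) (Fin d) (MPoly d)) (Ψ : Fin d → MPoly d)
    (f : MPoly d) : MPoly d :=
  (∑ i, ∑ j, Φ i j * pderiv i (pderiv j f)) + ∑ i, Ψ i * pderiv i f

lemma totalDegree_pderiv_le {d : ℕ} (i : Fin d) (f : MPoly d) :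
    (pderiv i f).totalDegree ≤ f.totalDegree - 1 := by
  conv_lhs => rw [f.as_sum]
  rw [map_sum]
  refine (totalDegree_finset_sum _ _).trans (Finset.sup_le fun v hv => ?_)
  rw [pderiv_monomial]
  by_cases h : v i = 0
  · simp [h]
  · refine (totalDegree_monomial_le _ _).trans ?_
    simp only [Function.id_def]
    have hle : Finsupp.single i 1 ≤ v := by
      rw [Finsupp.single_le_iff]; omega
    have hsum : (v - Finsupp.single i 1).sum (fun _ e => e) + 1 = v.sum (fun _ e => e) := by
      conv_rhs => rw [← tsub_add_cancel_of_le hle]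
      rw [Finsupp.sum_add_index' (fun _ => rfl) (fun _ _ _ => rfl),
        Finsupp.sum_single_index rfl]
    have hv' : v.sum (fun _ e => e) ≤ f.totalDegree := le_totalDegree hv
    omega

lemma pderiv_eq_zero_of_totalDegree_eq_zero {d : ℕ} {f : MPoly d}
    (h : f.totalDegree = 0) (i : Fin d) : pderiv i f = 0 := by
  apply pderiv_eq_zero_of_notMem_vars
  intro hi
  rw [mem_vars] at hi
  obtain ⟨m, hm, him⟩ := hi
  have := (totalDegree_eq_zero_iff _ f).mp h m hm i
  rw [Finsupp.mem_support_iff] at him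
  exact him this

lemma u_mul_eq_zero {d : ℕ} (u : MomF d) (P : (n : ℕ) → Fin (rdim d n) → MPoly d)
    (hW : IsWOPS u P) (n : ℕ) (k : Fin (rdim d n)) (f : MPoly d)
    (hf : f.totalDegree < n) : u (P n k * f) = 0 := by
  have hmem : f ∈ Submodule.span ℝ {g | ∃ m ≤ n - 1, ∃ j, P m j = g} :=
    hW.span (n - 1) ((mem_restrictTotalDegree _ _ f).mpr (by omega))
  refine Submodule.span_induction (p := fun x _ => u (P n k * x) = 0) ?_ ?_ ?_ ?_ hmem
  · rintro g ⟨m, hm, j, rfl⟩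
    exact hW.orth n m (by omega) k j
  · simp
  · intro x y _ _ hx hy
    rw [mul_add, map_add, hx, hy, add_zero]
  · intro a x _ hx
    rw [mul_smul_comm, _root_.map_smul, hx, smul_zero]

lemma totalDegree_Lop_le {d : ℕ} (Φ : Matrix (Fin d) (Fin d) (MPoly d))
    (Ψ : Fin d → MPoly d) (s : ℕ) (hΦ : matDeg Φ ≤ s + 2) (hΨ : vecDeg Ψ ≤ s + 1)
    (f : MPoly d) : (Lop Φ Ψ f).totalDegree ≤ f.totalDegree + s := by
  refine (totalDegree_add _ _).trans (max_le ?_ ?_)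
  · refine (totalDegree_finset_sum _ _).trans (Finset.sup_le fun i _ => ?_)
    refine (totalDegree_finset_sum _ _).trans (Finset.sup_le fun j _ => ?_)
    by_cases h1 : (pderiv j f).totalDegree = 0
    · rw [pderiv_eq_zero_of_totalDegree_eq_zero h1 i]
      simp
    · have hij : (Φ i j).totalDegree ≤ s + 2 :=
        le_trans (Finset.le_sup (f := fun p : Fin d × Fin d => (Φ p.1 p.2).totalDegree)
          (Finset.mem_univ (i, j))) hΦ
      have h2 := totalDegree_pderiv_le j f
      have h3 := totalDegree_pderiv_le i (pderiv j f)
      refine (totalDegree_mul _ _).trans ?_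
      omega
  · refine (totalDegree_finset_sum _ _).trans (Finset.sup_le fun i _ => ?_)
    by_cases h1 : f.totalDegree = 0
    · rw [pderiv_eq_zero_of_totalDegree_eq_zero h1 i]
      simp
    · have hi : (Ψ i).totalDegree ≤ s + 1 :=
        le_trans (Finset.le_sup (f := fun i => (Ψ i).totalDegree) (Finset.mem_univ i)) hΨ
      have h2 := totalDegree_pderiv_le i f
      refine (totalDegree_mul _ _).trans ?_
      omega

lemma pearson_key_id {d : ℕ} (Φ : Matrix (Fin d) (Fin d) (MPoly d)) (hΦsym : Φ.IsSymm)
    (Ψ : Fin d → MPoly d) (g h : MPoly d) :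
    (∑ i, (∑ j, Φ i j * pderiv j (g * pderiv i h) + Ψ i * (g * pderiv i h)))
      = (∑ i, ∑ j, Φ i j * pderiv i g * pderiv j h) + g * Lop Φ Ψ h := by
  have T1 : ∑ i, ∑ j, Φ i j * (pderiv j g * pderiv i h)
      = ∑ i, ∑ j, Φ i j * pderiv i g * pderiv j h := by
    rw [Finset.sum_comm]
    exact Finset.sum_congr rfl fun i _ => Finset.sum_congr rfl fun j _ => by
      rw [hΦsym.apply i j]; ring
  have T2 : ∑ i, ∑ j, Φ i j * (g * pderiv j (pderiv i h))
      = g * ∑ i, ∑ j, Φ i j * pderiv i (pderiv j h) := by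
    rw [Finset.sum_comm, Finset.mul_sum]
    refine Finset.sum_congr rfl fun i _ => ?_
    rw [Finset.mul_sum]
    exact Finset.sum_congr rfl fun j _ => by rw [hΦsym.apply i j]; ring
  have T3 : ∑ i, Ψ i * (g * pderiv i h) = g * ∑ i, Ψ i * pderiv i h := by
    rw [Finset.mul_sum]
    exact Finset.sum_congr rfl fun i _ => by ring
  simp only [pderiv_mul, mul_add, Finset.sum_add_distrib, Lop]
  rw [T1, T2, T3, add_assoc]

lemma pearson_bilinear {d : ℕ} (u : MomF d) (Φ : Matrix (Fin d) (Fin d) (MPoly d))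
    (hΦsym : Φ.IsSymm) (Ψ : Fin d → MPoly d) (hP : Pearson u Φ Ψ) (g h : MPoly d) :
    u (∑ i, ∑ j, Φ i j * pderiv i g * pderiv j h) = - u (g * Lop Φ Ψ h) := by
  have h0 : u (∑ i, (∑ j, Φ i j * pderiv j (g * pderiv i h) + Ψ i * (g * pderiv i h))) = 0 := by
    rw [map_sum]
    exact Finset.sum_eq_zero fun i _ => hP (g * pderiv i h) i
  rw [pearson_key_id Φ hΦsym Ψ g h, map_add] at h0
  linarith

/-- **Quasi-orthogonality of the gradients.**
If `u` is semiclassical with data `Φ` (symmetric, degree `p`), `Ψ` (degree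
`q ≥ 1`), `s = max{p−2, q−1}`, and `{ℙ_n}` is a WOPS for `u`, then for every
`n ≥ s+1` and every `0 ≤ m < n−s`, `⟨u, (∇ℙ_mᵗ)ᵗ Φ ∇ℙ_nᵗ⟩ = 0`. -/
theorem gradient_quasi_orthogonality
    {d : ℕ} (u : MomF d) (P : (n : ℕ) → Fin (rdim d n) → MPoly d)
    (hW : IsWOPS u P)
    (Φ : Matrix (Fin d) (Fin d) (MPoly d)) (hΦsym : Φ.IsSymm)
    (Ψ : Fin d → MPoly d)
    (p q : ℕ) (hp : matDeg Φ = p) (hq : vecDeg Ψ = q) (hq1 : 1 ≤ q)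
    (hPearson : Pearson u Φ Ψ)
    (hdet : (mApply u Φ).det ≠ 0)
    (s : ℕ) (hs : s = max (p - 2) (q - 1)) :
    ∀ n m : ℕ, s + 1 ≤ n → m + s < n →
      mApply u ((gradT (P m))ᵀ * Φ * gradT (P n)) = 0 := by
  intro n m hn hmn
  have hp2 : p ≤ s + 2 := by omega
  have hq2 : q ≤ s + 1 := by omega
  ext j k
  simp only [mApply, Matrix.of_apply, Matrix.zero_apply]
  have hentry : ((gradT (P m))ᵀ * Φ * gradT (P n)) j k
      = ∑ i, ∑ l, Φ i l * pderiv i (P n k) * pderiv l (P m j) := by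
    simp only [Matrix.mul_apply, gradT, Matrix.transpose_apply, Matrix.of_apply,
      Finset.sum_mul]
    refine Finset.sum_congr rfl fun i _ => Finset.sum_congr rfl fun l _ => ?_
    rw [hΦsym.apply i l]; ring
  rw [hentry, pearson_bilinear u Φ hΦsym Ψ hPearson (P n k) (P m j), neg_eq_zero]
  refine u_mul_eq_zero u P hW n k _ ?_
  have := totalDegree_Lop_le Φ Ψ s (hp ▸ hp2) (hq ▸ hq2) (P m j)
  rw [hW.deg m j] at this
  omega
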